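/- For all integers k ≥ 1 and ℓ ≥ 0, the sequence n ↦ I(n,k,ℓ) (defined for n ≥ k) converges as n → ∞ to a limit in [0,1]. -/

import Mathlib

open Filter

/-- The number of edges of `G` with both endpoints in `A`. -/
noncomputable def edgeCount {V : Type*} (G : SimpleGraph V) (A : Finset V) : ℕ :=
  {e ∈ G.edgeSet | ∀ v ∈ e, v ∈ A}.ncard

/-- The probability that a uniformly random `k`-element subset `A` of `Fin n`
satisfies the property `P`. -/
noncomputable def uniformProb (n k : ℕ) (P : Finset (Fin n) → Prop) : ℝ :=
  ({A : Finset (Fin n) | A.card = k ∧ P A}.ncard : ℝ) / (n.choose k)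

/-- `I(n, k, ℓ)`: the maximum, over all graphs `G` on `n` vertices, of the probability
that a uniformly random `k`-element subset of the vertices induces exactly `ℓ` edges. -/
noncomputable def maxInduceProb (n k ℓ : ℕ) : ℝ :=
  ⨆ G : SimpleGraph (Fin n), uniformProb n k (fun A => edgeCount G A = ℓ)

/-- `ind(k, ℓ) = lim_{n → ∞} I(n, k, ℓ)`. -/
noncomputable def ind (k ℓ : ℕ) : ℝ :=
  limUnder atTop (fun n => maxInduceProb n k ℓ)

private lemma ncard_setOf_eq_card_filter {α : Type*} [Fintype α] (p : α → Prop)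
    [DecidablePred p] :
    {x : α | p x}.ncard = (Finset.univ.filter p).card := by
  have h : {x : α | p x} = ↑(Finset.univ.filter p) := by
    ext x
    simp
  rw [h, Set.ncard_coe_finset]

private lemma uniformProb_nonneg (n k : ℕ) (P : Finset (Fin n) → Prop) :
    0 ≤ uniformProb n k P :=
  div_nonneg (by positivity) (by positivity)

private lemma uniformProb_le_one {n k : ℕ} (hk : k ≤ n) (P : Finset (Fin n) → Prop) :
    uniformProb n k P ≤ 1 := by
  have hpos : (0 : ℝ) < (n.choose k : ℝ) := by
    exact_mod_cast Nat.choose_pos hk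
  rw [uniformProb, div_le_one hpos]
  have hle : {A : Finset (Fin n) | A.card = k ∧ P A}.ncard ≤ n.choose k := by
    have hsub : {A : Finset (Fin n) | A.card = k ∧ P A}
        ⊆ ((Finset.univ.powersetCard k : Finset (Finset (Fin n))) : Set (Finset (Fin n))) := by
      intro A hA
      simp only [Finset.mem_coe, Finset.mem_powersetCard_univ]
      exact hA.1
    calc {A : Finset (Fin n) | A.card = k ∧ P A}.ncard
        ≤ ((Finset.univ.powersetCard k : Finset (Finset (Fin n))) : Set (Finset (Fin n))).ncard :=
          Set.ncard_le_ncard hsub (Set.toFinite _)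
      _ = n.choose k := by
          rw [Set.ncard_coe_finset, Finset.card_powersetCard, Finset.card_univ,
            Fintype.card_fin]
  exact_mod_cast hle

private lemma bddAbove_range_uniformProb (n k ℓ : ℕ) :
    BddAbove (Set.range fun G : SimpleGraph (Fin n) =>
      uniformProb n k fun A => edgeCount G A = ℓ) :=
  (Set.finite_range _).bddAbove

private lemma maxInduceProb_nonneg (n k ℓ : ℕ) : 0 ≤ maxInduceProb n k ℓ :=
  le_trans (uniformProb_nonneg n k _)
    (le_ciSup (bddAbove_range_uniformProb n k ℓ) (⊥ : SimpleGraph (Fin n)))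

private lemma maxInduceProb_le_one {n k : ℕ} (hk : k ≤ n) (ℓ : ℕ) :
    maxInduceProb n k ℓ ≤ 1 :=
  ciSup_le fun _ => uniformProb_le_one hk _

private lemma edgeCount_map {α β : Type*} (f : α ↪ β) (G : SimpleGraph β) (B : Finset α) :
    edgeCount G (B.map f) = edgeCount (G.comap f) B := by
  have himg : {e ∈ G.edgeSet | ∀ v ∈ e, v ∈ B.map f}
      = Sym2.map f '' {e ∈ (G.comap f).edgeSet | ∀ v ∈ e, v ∈ B} := by
    ext e
    constructor
    · rintro ⟨he, hv⟩
      induction e using Sym2.ind with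
      | _ u v =>
        obtain ⟨x, hx, hxu⟩ := Finset.mem_map.mp (hv u (Sym2.mem_mk_left u v))
        obtain ⟨y, hy, hyv⟩ := Finset.mem_map.mp (hv v (Sym2.mem_mk_right u v))
        refine ⟨s(x, y), ⟨?_, ?_⟩, ?_⟩
        · simp only [SimpleGraph.mem_edgeSet, SimpleGraph.comap_adj] at he ⊢
          rw [hxu, hyv]
          exact he
        · intro w hw
          rcases Sym2.mem_iff.mp hw with rfl | rfl
          exacts [hx, hy]
        · rw [Sym2.map_pair_eq, hxu, hyv]
    · rintro ⟨e', ⟨he', hv'⟩, rfl⟩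
      induction e' using Sym2.ind with
      | _ x y =>
        refine ⟨?_, ?_⟩
        · simpa [Sym2.map_pair_eq] using he'
        · intro w hw
          rw [Sym2.map_pair_eq] at hw
          rcases Sym2.mem_iff.mp hw with rfl | rfl
          · exact Finset.mem_map_of_mem f (hv' x (Sym2.mem_mk_left x y))
          · exact Finset.mem_map_of_mem f (hv' y (Sym2.mem_mk_right x y))
  unfold edgeCount
  rw [himg, Set.ncard_image_of_injective _ (Sym2.map.injective f.injective)]

private lemma card_subset_count {n k : ℕ} (ℓ : ℕ) (hk : k ≤ n) (G : SimpleGraph (Fin (n+1)))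
    (S : Finset (Fin (n+1))) (hS : S.card = n) :
    ((Finset.univ.filter fun A : Finset (Fin (n+1)) =>
        (A.card = k ∧ edgeCount G A = ℓ) ∧ A ⊆ S).card : ℝ)
      ≤ maxInduceProb n k ℓ * (n.choose k) := by
  classical
  set e : {x // x ∈ S} ≃ Fin n := S.equivFinOfCardEq hS with he
  set f : Fin n ↪ Fin (n+1) :=
    ⟨fun x => (e.symm x : Fin (n+1)),
      fun a b h => e.symm.injective (Subtype.ext h)⟩ with hf
  have hfS : ∀ x : Fin n, f x ∈ S := fun x => (e.symm x).2
  have hsurj : ∀ a ∈ S, ∃ x : Fin n, f x = a := by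
    intro a ha
    exact ⟨e ⟨a, ha⟩, by show ((e.symm (e ⟨a, ha⟩)) : Fin (n+1)) = a; simp⟩
  set G' := G.comap f with hG'
  have hcard : (Finset.univ.filter fun A : Finset (Fin (n+1)) =>
        (A.card = k ∧ edgeCount G A = ℓ) ∧ A ⊆ S).card
      = (Finset.univ.filter fun B : Finset (Fin n) =>
        B.card = k ∧ edgeCount G' B = ℓ).card := by
    have hmappre : ∀ A : Finset (Fin (n+1)), A ⊆ S →
        (A.preimage f f.injective.injOn).map f = A := by
      intro A hAS
      ext a
      simp only [Finset.mem_map, Finset.mem_preimage]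
      constructor
      · rintro ⟨x, hx, rfl⟩; exact hx
      · intro ha
        obtain ⟨x, rfl⟩ := hsurj a (hAS ha)
        exact ⟨x, ha, rfl⟩
    refine Finset.card_bij' (fun A _ => A.preimage f f.injective.injOn)
      (fun B _ => B.map f) ?_ ?_ ?_ ?_
    · intro A hA
      simp only [Finset.mem_filter, Finset.mem_univ, true_and] at hA ⊢
      obtain ⟨⟨hAcard, hAedge⟩, hAS⟩ := hA
      have hmap := hmappre A hAS
      constructor
      · have hpc : (A.preimage ⇑f f.injective.injOn).card = A.card := by
          conv_rhs => rw [← hmap]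
          rw [Finset.card_map]
        rw [hpc, hAcard]
      · rw [hG', ← edgeCount_map f G, hmap, hAedge]
    · intro B hB
      simp only [Finset.mem_filter, Finset.mem_univ, true_and] at hB ⊢
      obtain ⟨hBcard, hBedge⟩ := hB
      refine ⟨⟨?_, ?_⟩, ?_⟩
      · rw [Finset.card_map, hBcard]
      · rw [edgeCount_map f G, ← hG']
        exact hBedge
      · intro a ha
        obtain ⟨x, -, rfl⟩ := Finset.mem_map.mp ha
        exact hfS x
    · intro A hA
      simp only [Finset.mem_filter, Finset.mem_univ, true_and] at hA
      exact hmappre A hA.2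
    · intro B _
      exact Finset.preimage_map f B
  rw [hcard]
  have hprob : ((Finset.univ.filter fun B : Finset (Fin n) =>
      B.card = k ∧ edgeCount G' B = ℓ).card : ℝ)
      = uniformProb n k (fun B => edgeCount G' B = ℓ) * (n.choose k) := by
    rw [uniformProb, ncard_setOf_eq_card_filter, div_mul_cancel₀]
    exact_mod_cast (Nat.choose_pos hk).ne'
  rw [hprob]
  have hle : uniformProb n k (fun B => edgeCount G' B = ℓ) ≤ maxInduceProb n k ℓ :=
    le_ciSup (bddAbove_range_uniformProb n k ℓ) G'
  have hc : (0 : ℝ) ≤ (n.choose k : ℝ) := by positivity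
  exact mul_le_mul_of_nonneg_right hle hc

private lemma maxInduceProb_succ_le {n k : ℕ} (ℓ : ℕ) (hk : k ≤ n) :
    maxInduceProb (n+1) k ℓ ≤ maxInduceProb n k ℓ := by
  classical
  apply ciSup_le
  intro G
  set 𝒜 := Finset.univ.filter
    (fun A : Finset (Fin (n+1)) => A.card = k ∧ edgeCount G A = ℓ) with h𝒜
  -- double counting over erased vertices
  have hdc : ∑ v : Fin (n+1), (𝒜.filter fun A => A ⊆ Finset.univ.erase v).card
      = 𝒜.card * (n + 1 - k) := by
    have hstep : ∀ v : Fin (n+1), (𝒜.filter fun A => A ⊆ Finset.univ.erase v).card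
        = ∑ A ∈ 𝒜, if A ⊆ Finset.univ.erase v then 1 else 0 := fun v =>
      Finset.card_filter _ _
    simp only [hstep]
    rw [Finset.sum_comm]
    have hA : ∀ A ∈ 𝒜, (∑ v : Fin (n+1), if A ⊆ Finset.univ.erase v then 1 else 0)
        = n + 1 - k := by
      intro A hA
      obtain ⟨-, hAcard, -⟩ := Finset.mem_filter.mp hA
      rw [← Finset.card_filter]
      have hcompl : (Finset.univ.filter fun v : Fin (n+1) => A ⊆ Finset.univ.erase v) = Aᶜ := by
        ext v
        simp [Finset.subset_erase]
      rw [hcompl, Finset.card_compl, hAcard, Fintype.card_fin]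
    rw [Finset.sum_congr rfl hA, Finset.sum_const, smul_eq_mul, mul_comm]
  -- bound each summand
  have hbound : ∀ v : Fin (n+1),
      (((𝒜.filter fun A => A ⊆ Finset.univ.erase v).card : ℕ) : ℝ)
        ≤ maxInduceProb n k ℓ * (n.choose k) := by
    intro v
    have hScard : (Finset.univ.erase v).card = n := by
      rw [Finset.card_erase_of_mem (Finset.mem_univ v), Finset.card_univ, Fintype.card_fin]
      omega
    have := card_subset_count ℓ hk G (Finset.univ.erase v) hScard
    rw [h𝒜, Finset.filter_filter]
    exact this
  have hsum : ((𝒜.card : ℝ)) * ((n + 1 - k : ℕ) : ℝ)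
      ≤ (n + 1 : ℝ) * (maxInduceProb n k ℓ * (n.choose k)) := by
    have h1 : ((𝒜.card * (n + 1 - k) : ℕ) : ℝ)
        = ∑ v : Fin (n+1), (((𝒜.filter fun A => A ⊆ Finset.univ.erase v).card : ℕ) : ℝ) := by
      rw [← hdc, Nat.cast_sum]
    calc ((𝒜.card : ℝ)) * ((n + 1 - k : ℕ) : ℝ)
        = ((𝒜.card * (n + 1 - k) : ℕ) : ℝ) := by push_cast; ring
      _ = ∑ v : Fin (n+1), (((𝒜.filter fun A => A ⊆ Finset.univ.erase v).card : ℕ) : ℝ) := h1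
      _ ≤ ∑ _v : Fin (n+1), maxInduceProb n k ℓ * (n.choose k) :=
          Finset.sum_le_sum fun v _ => hbound v
      _ = (n + 1 : ℝ) * (maxInduceProb n k ℓ * (n.choose k)) := by
          rw [Finset.sum_const, Finset.card_univ, Fintype.card_fin, nsmul_eq_mul]
          push_cast; ring
  -- the binomial identity
  have hid : (n + 1) * n.choose k = (n+1).choose k * (n + 1 - k) := by
    have h1 := Nat.add_one_mul_choose_eq n k
    have h2 := Nat.choose_succ_right_eq (n+1) k
    rw [h1, h2]
  -- conclude
  have hchoosepos : (0 : ℝ) < ((n+1).choose k : ℝ) := by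
    exact_mod_cast Nat.choose_pos (le_trans hk (Nat.le_succ n))
  have hcpos : (0 : ℝ) < ((n + 1 - k : ℕ) : ℝ) := by
    have : 0 < n + 1 - k := by omega
    exact_mod_cast this
  have huP : uniformProb (n+1) k (fun A => edgeCount G A = ℓ)
      = (𝒜.card : ℝ) / ((n+1).choose k) := by
    rw [uniformProb, ncard_setOf_eq_card_filter]
  rw [huP, div_le_iff₀ hchoosepos]
  -- suffices: 𝒜.card ≤ I(n) * choose (n+1) k
  rw [← mul_le_mul_iff_left₀ hcpos]
  calc (𝒜.card : ℝ) * ((n + 1 - k : ℕ) : ℝ)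
      ≤ (n + 1 : ℝ) * (maxInduceProb n k ℓ * (n.choose k)) := hsum
    _ = maxInduceProb n k ℓ * (((n + 1) * n.choose k : ℕ) : ℝ) := by push_cast; ring
    _ = maxInduceProb n k ℓ * ((n+1).choose k : ℝ) * ((n + 1 - k : ℕ) : ℝ) := by
        rw [hid]; push_cast; ring

/-- For all `k ≥ 1` and `ℓ`, the sequence `n ↦ I(n, k, ℓ)` converges as `n → ∞`
to a limit lying in `[0, 1]`. -/
theorem maxInduceProb_tendsto (k ℓ : ℕ) (hk : 1 ≤ k) :
    ∃ L : ℝ, 0 ≤ L ∧ L ≤ 1 ∧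
      Tendsto (fun n => maxInduceProb n k ℓ) atTop (nhds L) := by
  set g : ℕ → ℝ := fun n => maxInduceProb (n + k) k ℓ with hg
  have hanti : Antitone g := by
    apply antitone_nat_of_succ_le
    intro n
    have : maxInduceProb (n + k + 1) k ℓ ≤ maxInduceProb (n + k) k ℓ :=
      maxInduceProb_succ_le ℓ (Nat.le_add_left k n)
    simpa [hg, Nat.add_right_comm] using this
  have hbdd : BddBelow (Set.range g) := by
    refine ⟨0, ?_⟩
    rintro x ⟨n, rfl⟩
    exact maxInduceProb_nonneg _ _ _
  refine ⟨⨅ n, g n, ?_, ?_, ?_⟩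
  · exact le_ciInf fun n => maxInduceProb_nonneg _ _ _
  · exact le_trans (ciInf_le hbdd 0) (maxInduceProb_le_one (by omega) ℓ)
  · rw [← Filter.tendsto_add_atTop_iff_nat k]
    exact tendsto_atTop_ciInf hanti hbdd
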